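/- Let E be a finite-dimensional complex normed space (e.g. E = ℂⁿ). Let g = (g_r)_{r≥0} be a formal multilinear power series from E to E (each g_r a continuous r-multilinear map Eʳ → E) with zero constant coefficient g₀ = 0 and with positive radius of convergence (so g is the Taylor series at 0 of an analytic map G defined near 0 with G(0) = 0). Let p ∈ ℂ with |p| > 1, and let f = Σ_{k≥1} f_k zᵏ be a one-variable formal power series with coefficients f_k ∈ E and zero constant term which is a formal solution of the difference equation f(pz) = G(f(z)); that is, for every k ≥ 1, pᵏ·f_k equals the k-th coefficient of the formal composition g ∘ f. Then f has positive radius of convergence, i.e. f converges to an analytic function in some neighborhood of zero. -/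

import Mathlib

open Finset

set_option maxHeartbeats 1600000 in
/-- key analytic lemma of the appendix.
Let `E` be a finite-dimensional complex normed space, `g` a formal multilinear
power series from `E` to `E` with zero constant coefficient and positive radius
of convergence, and `p ∈ ℂ` with `|p| > 1`.  If `f = Σ_{k≥1} f_k zᵏ` is a
one-variable formal power series with values in `E`, zero constant term, which
formally solves `f(pz) = G(f(z))` (i.e. `pᵏ • f_k` is the `k`-th coefficient of
the formal composition `g ∘ f` for all `k ≥ 1`), then `f` has positive radius
of convergence. -/
theorem formal_solution_of_difference_equation_converges
    {E : Type*} [NormedAddCommGroup E] [NormedSpace ℂ E] [FiniteDimensional ℂ E]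
    (g : FormalMultilinearSeries ℂ E E) (hg0 : g 0 = 0) (hgrad : 0 < g.radius)
    (p : ℂ) (hp : 1 < ‖p‖)
    (f : FormalMultilinearSeries ℂ ℂ E) (hf0 : f 0 = 0)
    (hfeq : ∀ k : ℕ, 1 ≤ k → p ^ k • f.coeff k = (g.comp f).coeff k) :
    0 < f.radius := by
  obtain ⟨C, r, Cpos, rpos, gle⟩ := g.le_mul_pow_of_radius_pos hgrad
  set P : ℝ := ‖p‖ with hPdef
  have hP1 : 1 < P := hp
  obtain ⟨N, hN⟩ := pow_unbounded_of_one_lt (R := ℝ) (‖g 1‖ + 1) hP1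
  set k₀ : ℕ := max N 2 with hk₀def
  have hk₀2 : 2 ≤ k₀ := le_max_right _ _
  have hpk : ∀ k, k₀ ≤ k → ‖g 1‖ + 1 ≤ P ^ k := by
    intro k hk
    exact hN.le.trans (pow_le_pow_right₀ hP1.le ((le_max_left N 2).trans hk))
  -- the key recursive estimate
  have key : ∀ k, k₀ ≤ k → ‖f k‖ ≤
      C * ∑ c ∈ ({c | 1 < Composition.length c}.toFinset : Finset (Composition k)),
        r ^ c.length * ∏ j, ‖f (c.blocksFun j)‖ := by
    intro k hk
    have hk1 : 0 < k := by omega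
    set T : ℝ := C * ∑ c ∈ ({c | 1 < Composition.length c}.toFinset : Finset (Composition k)),
        r ^ c.length * ∏ j, ‖f (c.blocksFun j)‖ with hTdef
    have h1 : P ^ k * ‖f k‖ = ‖(g.comp f).coeff k‖ := by
      rw [← hfeq k hk1, norm_smul, norm_pow,
        FormalMultilinearSeries.norm_apply_eq_norm_coef]
    have h2 : ‖(g.comp f).coeff k‖ = ‖(g.comp f) k‖ :=
      (FormalMultilinearSeries.norm_apply_eq_norm_coef).symm
    have hsingle :
        (Finset.univ.filter fun c : Composition k => ¬ 1 < c.length)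
          = {Composition.single k hk1} := by
      ext c
      simp only [Finset.mem_filter, Finset.mem_univ, true_and, not_lt, Finset.mem_singleton]
      constructor
      · intro h
        exact (Composition.eq_single_iff_length hk1).2
          (le_antisymm h (c.length_pos_of_pos hk1))
      · intro h
        rw [h, Composition.single_length]
    have hsb : ‖g.compAlongComposition f (Composition.single k hk1)‖ ≤ ‖g 1‖ * ‖f k‖ := by
      refine (g.compAlongComposition_norm f _).trans (le_of_eq ?_)
      have hprod : (∏ j, ‖f ((Composition.single k hk1).blocksFun j)‖)
          = ‖f k‖ ^ (Composition.single k hk1).length := by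
        rw [Finset.prod_congr rfl fun j _ => by rw [Composition.single_blocksFun]]
        rw [Finset.prod_const, Finset.card_univ, Fintype.card_fin]
      rw [hprod, Composition.single_length, pow_one]
    have h3 : ‖(g.comp f) k‖ ≤ T + ‖g 1‖ * ‖f k‖ := by
      calc ‖(g.comp f) k‖ = ‖∑ c : Composition k, g.compAlongComposition f c‖ := rfl
        _ ≤ ∑ c : Composition k, ‖g.compAlongComposition f c‖ := norm_sum_le _ _
        _ = (∑ c ∈ ({c | 1 < Composition.length c}.toFinset : Finset (Composition k)),
              ‖g.compAlongComposition f c‖)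
            + ‖g.compAlongComposition f (Composition.single k hk1)‖ := by
          rw [← Finset.sum_filter_add_sum_filter_not Finset.univ
            (fun c : Composition k => 1 < c.length)
            (fun c => ‖g.compAlongComposition f c‖)]
          congr 1
          · refine Finset.sum_congr ?_ fun _ _ => rfl
            ext c
            simp [Set.mem_toFinset]
          · rw [hsingle, Finset.sum_singleton]
        _ ≤ T + ‖g 1‖ * ‖f k‖ := by
          rw [hTdef, Finset.mul_sum]
          refine add_le_add (Finset.sum_le_sum fun c _ => ?_) hsb
          refine (g.compAlongComposition_norm f c).trans ?_
          rw [← mul_assoc]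
          exact mul_le_mul_of_nonneg_right (gle _)
            (Finset.prod_nonneg fun j _ => norm_nonneg _)
    have h4 : (‖g 1‖ + 1) * ‖f k‖ ≤ P ^ k * ‖f k‖ :=
      mul_le_mul_of_nonneg_right (hpk k hk) (norm_nonneg _)
    rw [add_mul, one_mul] at h4
    have h5 : P ^ k * ‖f k‖ ≤ T + ‖g 1‖ * ‖f k‖ := by rw [h1, h2]; exact h3
    linarith [h5, h4]
  -- setup of constants
  set Qstar : ℝ := ∑ k ∈ Ico 1 k₀, ‖f k‖ with hQdef
  have hQ0 : 0 ≤ Qstar := Finset.sum_nonneg fun k _ => norm_nonneg _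
  set K : ℝ := Qstar + 1 with hKdef
  have hK1 : 1 ≤ K := by simp [hKdef]; linarith
  have hKpos : 0 < K := by linarith
  set a : ℝ := min 1 (min ((1 / 2) / (r * K)) (1 / (2 * C * r ^ 2 * K ^ 2))) with hadef
  have apos : 0 < a := by
    refine lt_min one_pos (lt_min ?_ ?_)
    · exact div_pos one_half_pos (mul_pos rpos hKpos)
    · refine div_pos one_pos ?_
      have : (0:ℝ) < 2 * C := by linarith
      positivity
  have ha1 : a ≤ 1 := min_le_left _ _
  have ha2 : r * K * a ≤ 1 / 2 := by
    have h : a ≤ 1 / 2 / (r * K) := by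
      rw [hadef]; exact (min_le_right _ _).trans (min_le_left _ _)
    have hrK : 0 < r * K := mul_pos rpos hKpos
    calc r * K * a = a * (r * K) := by ring
      _ ≤ 1 / 2 := (le_div_iff₀ hrK).1 h
  have ha3 : 2 * C * r ^ 2 * K ^ 2 * a ≤ 1 := by
    have h : a ≤ 1 / (2 * C * r ^ 2 * K ^ 2) := by
      rw [hadef]; exact (min_le_right _ _).trans (min_le_right _ _)
    have hpos : 0 < 2 * C * r ^ 2 * K ^ 2 := by
      have : (0:ℝ) < 2 * C := by linarith
      positivity
    calc 2 * C * r ^ 2 * K ^ 2 * a = a * (2 * C * r ^ 2 * K ^ 2) := by ring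
      _ ≤ 1 := (le_div_iff₀ hpos).1 h
  -- partial sums
  set S : ℕ → ℝ := fun n => ∑ k ∈ Ico 1 n, a ^ k * ‖f k‖ with hSdef
  have Snonneg : ∀ n, 0 ≤ S n := fun n =>
    Finset.sum_nonneg fun k _ => mul_nonneg (pow_nonneg apos.le _) (norm_nonneg _)
  have chunk1 : ∀ m, m ≤ k₀ → (∑ k ∈ Ico 1 m, a ^ k * ‖f k‖) ≤ Qstar * a := by
    intro m hm
    calc (∑ k ∈ Ico 1 m, a ^ k * ‖f k‖) ≤ ∑ k ∈ Ico 1 k₀, a ^ k * ‖f k‖ := by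
          refine Finset.sum_le_sum_of_subset_of_nonneg (Finset.Ico_subset_Ico le_rfl hm)
            fun k _ _ => mul_nonneg (pow_nonneg apos.le _) (norm_nonneg _)
      _ ≤ ∑ k ∈ Ico 1 k₀, a * ‖f k‖ := by
          refine Finset.sum_le_sum fun k hk => ?_
          have hk1 : 1 ≤ k := (Finset.mem_Ico.1 hk).1
          have : a ^ k ≤ a ^ 1 := pow_le_pow_of_le_one apos.le ha1 hk1
          rw [pow_one] at this
          exact mul_le_mul_of_nonneg_right this (norm_nonneg _)
      _ = Qstar * a := by rw [← Finset.mul_sum, hQdef]; ring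
  have IRec : ∀ n, S n ≤ K * a := by
    intro n
    induction n with
    | zero => simpa [hSdef] using mul_nonneg hKpos.le apos.le
    | succ n ih =>
      by_cases hcase : n + 1 ≤ k₀
      · calc S (n + 1) ≤ Qstar * a := chunk1 _ hcase
          _ ≤ K * a := mul_le_mul_of_nonneg_right (by linarith) apos.le
      · push_neg at hcase
        have hk₀n : k₀ ≤ n := by omega
        have rSn : r * S n ≤ 1 / 2 := by
          calc r * S n ≤ r * (K * a) := by
                exact mul_le_mul_of_nonneg_left ih rpos.le
            _ = r * K * a := by ring
            _ ≤ 1 / 2 := ha2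
        have hsplit : S (n + 1) = (∑ k ∈ Ico 1 k₀, a ^ k * ‖f k‖)
            + ∑ k ∈ Ico k₀ (n + 1), a ^ k * ‖f k‖ := by
          rw [hSdef]
          exact (Finset.sum_Ico_consecutive _ (by omega) (by omega)).symm
        have hbound2 : (∑ k ∈ Ico k₀ (n + 1), a ^ k * ‖f k‖) ≤ a := by
          calc (∑ k ∈ Ico k₀ (n + 1), a ^ k * ‖f k‖)
              ≤ ∑ k ∈ Ico k₀ (n + 1), a ^ k *
                  (C * ∑ c ∈ ({c | 1 < Composition.length c}.toFinset :
                      Finset (Composition k)),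
                    r ^ c.length * ∏ j, ‖f (c.blocksFun j)‖) := by
                refine Finset.sum_le_sum fun k hk => ?_
                exact mul_le_mul_of_nonneg_left (key k (Finset.mem_Ico.1 hk).1)
                  (pow_nonneg apos.le _)
            _ ≤ ∑ k ∈ Ico 2 (n + 1), a ^ k *
                  (C * ∑ c ∈ ({c | 1 < Composition.length c}.toFinset :
                      Finset (Composition k)),
                    r ^ c.length * ∏ j, ‖f (c.blocksFun j)‖) := by
                refine Finset.sum_le_sum_of_subset_of_nonneg
                  (Finset.Ico_subset_Ico hk₀2 le_rfl) fun k _ _ => ?_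
                refine mul_nonneg (pow_nonneg apos.le _) (mul_nonneg Cpos.le ?_)
                exact Finset.sum_nonneg fun c _ => mul_nonneg (pow_nonneg rpos.le _)
                  (Finset.prod_nonneg fun j _ => norm_nonneg _)
            _ = C * ∑ k ∈ Ico 2 (n + 1), a ^ k *
                  ∑ c ∈ ({c | 1 < Composition.length c}.toFinset :
                      Finset (Composition k)),
                    r ^ c.length * ∏ j, ‖f (c.blocksFun j)‖ := by
                rw [Finset.mul_sum]
                exact Finset.sum_congr rfl fun k _ => by ring
            _ ≤ C * ∑ j ∈ Ico 2 (n + 1), r ^ j * (∑ k ∈ Ico 1 n, a ^ k * ‖f k‖) ^ j := by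
                refine mul_le_mul_of_nonneg_left ?_ Cpos.le
                exact FormalMultilinearSeries.radius_right_inv_pos_of_radius_pos_aux1 n
                  (fun k => ‖f k‖) (fun k => norm_nonneg _) rpos.le apos.le
            _ = C * ∑ j ∈ Ico 2 (n + 1), (r * S n) ^ j := by
                rw [hSdef]
                simp_rw [mul_pow]
            _ = C * (((r * S n) ^ 2 - (r * S n) ^ (n + 1)) / (1 - r * S n)) := by
                rw [geom_sum_Ico' (by intro h; rw [h] at rSn; norm_num at rSn) (by omega)]
            _ ≤ C * ((r * S n) ^ 2 / (1 / 2)) := by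
                gcongr
                · simp only [sub_le_self_iff]
                  positivity
                · linarith only [rSn]
            _ = 2 * C * (r * S n) ^ 2 := by ring
            _ ≤ 2 * C * (r * (K * a)) ^ 2 := by
                have h0 : 0 ≤ r * S n := mul_nonneg rpos.le (Snonneg n)
                have h' : r * S n ≤ r * (K * a) := mul_le_mul_of_nonneg_left ih rpos.le
                exact mul_le_mul_of_nonneg_left (pow_le_pow_left₀ h0 h' 2)
                  (by linarith : (0:ℝ) ≤ 2 * C)
            _ = (2 * C * r ^ 2 * K ^ 2 * a) * a := by ring
            _ ≤ 1 * a := mul_le_mul_of_nonneg_right ha3 apos.le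
            _ = a := one_mul a
        calc S (n + 1) = _ := hsplit
          _ ≤ Qstar * a + a := add_le_add (chunk1 _ le_rfl) hbound2
          _ = K * a := by rw [hKdef]; ring
  -- conclude
  have hfn : ∀ n, ‖f n‖ * a ^ n ≤ K * a := by
    intro n
    match n with
    | 0 => simp [hf0]; positivity
    | (m + 1) =>
      calc ‖f (m + 1)‖ * a ^ (m + 1) = a ^ (m + 1) * ‖f (m + 1)‖ := mul_comm _ _
        _ ≤ S (m + 2) := by
            refine Finset.single_le_sum (f := fun k => a ^ k * ‖f k‖)
              (fun k _ => mul_nonneg (pow_nonneg apos.le _) (norm_nonneg _)) ?_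
            simp only [Finset.mem_Ico]
            omega
        _ ≤ K * a := IRec _
  have hle := f.le_radius_of_bound (K * a) (r := ⟨a, apos.le⟩) hfn
  refine lt_of_lt_of_le ?_ hle
  exact ENNReal.coe_pos.2 apos
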